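/- Fix integers p ≥ 2 and q ≥ 2 with q ≡ 0 (mod p). For all non-negative integers x and y, the Grundy value of (x,y) in the (p,q)-restricted Ryūō Nim is 𝒢(x,y) = mod(mod(x,q) + mod(y,q), p) + p·(⌊mod(x,q)/p⌋ ⊕ ⌊mod(y,q)/p⌋). -/

import Mathlib

/-- The minimum excluded value of a set of natural numbers. -/
noncomputable def mex (S : Set ℕ) : ℕ := sInf {n : ℕ | n ∉ S}

/-- Moves of the restricted Ryūō Nim: diagonal moves remove a total of at most
`p - 1` tokens, horizontal moves remove at most `q - 1` tokens, and vertical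
moves remove at most `r - 1` tokens. -/
def resMove (p q r : ℕ) (pos : ℕ × ℕ) : Set (ℕ × ℕ) :=
  {a | ∃ s : ℕ, 1 ≤ s ∧ s ≤ pos.1 ∧ s ≤ q - 1 ∧ a = (pos.1 - s, pos.2)} ∪
  {a | ∃ t : ℕ, 1 ≤ t ∧ t ≤ pos.2 ∧ t ≤ r - 1 ∧ a = (pos.1, pos.2 - t)} ∪
  {a | ∃ s t : ℕ, 1 ≤ s ∧ s ≤ pos.1 ∧ 1 ≤ t ∧ t ≤ pos.2 ∧ s + t ≤ p - 1 ∧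
        a = (pos.1 - s, pos.2 - t)}

namespace RyuoAux

lemma mex_eq_of {S : Set ℕ} {v : ℕ} (h1 : v ∉ S) (h2 : ∀ k < v, k ∈ S) : mex S = v := by
  have hv : v ∈ {n : ℕ | n ∉ S} := h1
  refine le_antisymm (Nat.sInf_le hv) ?_
  by_contra hc
  push_neg at hc
  have hmem := Nat.sInf_mem (⟨v, hv⟩ : Set.Nonempty {n : ℕ | n ∉ S})
  exact hmem (h2 _ hc)

lemma mod_sub_le {m n d : ℕ} (hm : 0 < m) (h : d ≤ n % m) : (n - d) % m = n % m - d := by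
  conv_lhs => rw [← Nat.div_add_mod n m]
  rw [Nat.add_sub_assoc h, Nat.mul_add_mod]
  exact Nat.mod_eq_of_lt (by have := Nat.mod_lt n hm; omega)

lemma div_sub_le {m n d : ℕ} (hm : 0 < m) (h : d ≤ n % m) : (n - d) / m = n / m := by
  have h1 : n - d = m * (n / m) + (n % m - d) := by
    have h0 := Nat.div_add_mod n m
    omega
  have h2 : (n % m - d) / m = 0 :=
    Nat.div_eq_of_lt (by have := Nat.mod_lt n hm; omega)
  rw [h1, Nat.mul_add_div hm, h2, Nat.add_zero]

lemma mod_sub_gt {m n d : ℕ} (h1 : n % m < d) (h2 : d ≤ n) (h3 : d < m) :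
    (n - d) % m = m + n % m - d := by
  have h0 := Nat.div_add_mod n m
  have hm : 0 < m := by omega
  have hq : 0 < n / m := by
    rcases Nat.eq_zero_or_pos (n / m) with h | h
    · rw [h, Nat.mul_zero] at h0; omega
    · exact h
  obtain ⟨e, he⟩ : ∃ e, n / m = e + 1 := ⟨n / m - 1, by omega⟩
  rw [he, Nat.mul_add, Nat.mul_one] at h0
  have h4 : n - d = m * e + (m + n % m - d) := by omega
  have h5 : m + n % m - d < m := by omega
  rw [h4, Nat.mul_add_mod]
  exact Nat.mod_eq_of_lt h5

lemma mod_sub_ne {m n d : ℕ} (hd1 : 1 ≤ d) (hdm : d < m) (hdn : d ≤ n) :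
    (n - d) % m ≠ n % m := by
  have hm : 0 < m := by omega
  by_cases h : d ≤ n % m
  · rw [mod_sub_le hm h]; omega
  · rw [mod_sub_gt (by omega) hdn hdm]; omega

/-- The conjectured Grundy value. -/
def fval (p q : ℕ) (r : ℕ × ℕ) : ℕ :=
  (r.1 % q + r.2 % q) % p + p * ((r.1 % q / p) ^^^ (r.2 % q / p))

lemma fval_decomp {p : ℕ} (hp : 0 < p) {l1 l2 h1 h2 : ℕ} (hl1 : l1 < p) (hl2 : l2 < p)
    (h : l1 + p * h1 = l2 + p * h2) : l1 = l2 ∧ h1 = h2 := by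
  have e1 : (l1 + p * h1) % p = l1 := by
    rw [Nat.add_comm, Nat.mul_add_mod]; exact Nat.mod_eq_of_lt hl1
  have e2 : (l2 + p * h2) % p = l2 := by
    rw [Nat.add_comm, Nat.mul_add_mod]; exact Nat.mod_eq_of_lt hl2
  have hl : l1 = l2 := by rw [← e1, ← e2, h]
  refine ⟨hl, ?_⟩
  have : p * h1 = p * h2 := by omega
  exact Nat.eq_of_mul_eq_mul_left hp this

lemma xor_right_cancel {a b c : ℕ} (h : a ^^^ c = b ^^^ c) : a = b := by
  have := congrArg (· ^^^ c) h
  simpa [xor_cancel_right] using this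

lemma fval_ne_of_fst {p q : ℕ} (hp : 0 < p) (hq : 0 < q) {x y x' : ℕ}
    (h : x' % q ≠ x % q) : fval p q (x', y) ≠ fval p q (x, y) := by
  intro he
  apply h
  unfold fval at he
  simp only at he
  have hl1 : (x' % q + y % q) % p < p := Nat.mod_lt _ hp
  have hl2 : (x % q + y % q) % p < p := Nat.mod_lt _ hp
  obtain ⟨hlow, hhigh⟩ := fval_decomp hp hl1 hl2 he
  have hdiv : x' % q / p = x % q / p := xor_right_cancel hhigh
  have hmod : x' % q % p = x % q % p :=
    Nat.ModEq.add_right_cancel' (y % q) hlow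
  have e1 := Nat.div_add_mod (x' % q) p
  have e2 := Nat.div_add_mod (x % q) p
  rw [hdiv, hmod] at e1
  omega

lemma fval_ne_of_snd {p q : ℕ} (hp : 0 < p) (hq : 0 < q) {x y y' : ℕ}
    (h : y' % q ≠ y % q) : fval p q (x, y') ≠ fval p q (x, y) := by
  intro he
  apply h
  unfold fval at he
  simp only at he
  have hl1 : (x % q + y' % q) % p < p := Nat.mod_lt _ hp
  have hl2 : (x % q + y % q) % p < p := Nat.mod_lt _ hp
  obtain ⟨hlow, hhigh⟩ := fval_decomp hp hl1 hl2 he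
  have hdiv : y' % q / p = y % q / p := by
    have h1 : (y' % q / p) ^^^ (x % q / p) = (y % q / p) ^^^ (x % q / p) := by
      rw [Nat.xor_comm, hhigh, Nat.xor_comm]
    exact xor_right_cancel h1
  have hmod : y' % q % p = y % q % p := by
    have h1 : y' % q + x % q ≡ y % q + x % q [MOD p] := by
      unfold Nat.ModEq
      rw [Nat.add_comm (y' % q), Nat.add_comm (y % q)]
      exact hlow
    exact Nat.ModEq.add_right_cancel' (x % q) h1
  have e1 := Nat.div_add_mod (y' % q) p
  have e2 := Nat.div_add_mod (y % q) p
  rw [hdiv, hmod] at e1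
  omega

lemma fval_mod {p q : ℕ} (hp : 0 < p) (hpq : p ∣ q) (u v : ℕ) :
    fval p q (u, v) % p = (u + v) % p := by
  unfold fval
  simp only
  rw [Nat.add_comm, Nat.mul_add_mod, Nat.mod_mod_of_dvd _ (dvd_refl p)]
  calc (u % q + v % q) % p = (u % q % p + v % q % p) % p := Nat.add_mod _ _ _
    _ = (u % p + v % p) % p := by rw [Nat.mod_mod_of_dvd u hpq, Nat.mod_mod_of_dvd v hpq]
    _ = (u + v) % p := (Nat.add_mod u v p).symm



lemma fval_sub_small {p q x y s t : ℕ} (hp0 : 0 < p) (hq0 : 0 < q)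
    (hs : s ≤ x % q % p) (ht : t ≤ y % q % p) (hst : s + t ≤ (x % q + y % q) % p) :
    fval p q (x - s, y - t) =
      ((x % q + y % q) % p - (s + t)) + p * ((x % q / p) ^^^ (y % q / p)) := by
  have hs' : s ≤ x % q := le_trans hs (Nat.mod_le _ _)
  have ht' : t ≤ y % q := le_trans ht (Nat.mod_le _ _)
  have h1 : (x - s) % q = x % q - s := mod_sub_le hq0 hs'
  have h2 : (y - t) % q = y % q - t := mod_sub_le hq0 ht'
  have h3 : (x % q - s) / p = x % q / p := div_sub_le hp0 hs
  have h4 : (y % q - t) / p = y % q / p := div_sub_le hp0 ht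
  have h5 : (x % q - s) + (y % q - t) = (x % q + y % q) - (s + t) := by omega
  unfold fval
  simp only
  rw [h1, h2, h3, h4, h5, mod_sub_le hp0 hst]

lemma fval_hor {p q x y A : ℕ} (hq0 : 0 < q) (hA : A < x % q) :
    fval p q (x - (x % q - A), y) =
      (A + y % q) % p + p * ((A / p) ^^^ (y % q / p)) := by
  have h1 : (x - (x % q - A)) % q = A := by
    rw [mod_sub_le hq0 (Nat.sub_le (x % q) A)]
    omega
  unfold fval
  simp only
  rw [h1]

lemma fval_ver {p q x y B : ℕ} (hq0 : 0 < q) (hB : B < y % q) :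
    fval p q (x, y - (y % q - B)) =
      (x % q + B) % p + p * ((x % q / p) ^^^ (B / p)) := by
  have h1 : (y - (y % q - B)) % q = B := by
    rw [mod_sub_le hq0 (Nat.sub_le (y % q) B)]
    omega
  unfold fval
  simp only
  rw [h1]

lemma move_lt {p q r x y : ℕ} {z : ℕ × ℕ} (hz : z ∈ resMove p q r (x, y)) :
    z.1 + z.2 < x + y := by
  simp only [resMove, Set.mem_union, Set.mem_setOf_eq] at hz
  rcases hz with (⟨s, hs1, hsx, _, rfl⟩ | ⟨t, ht1, hty, _, rfl⟩) |
    ⟨s, t, hs1, hsx, ht1, hty, _, rfl⟩ <;> simp <;> omega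

lemma key {p q : ℕ} (hp2 : 2 ≤ p) (hq2 : 2 ≤ q) (hpq : p ∣ q) (x y : ℕ) :
    mex (fval p q '' resMove p q q (x, y)) = fval p q (x, y) := by
  have hp0 : 0 < p := by omega
  have hq0 : 0 < q := by omega
  have hpleq : p ≤ q := Nat.le_of_dvd hq0 hpq
  have hax : x % q ≤ x := Nat.mod_le x q
  have hby : y % q ≤ y := Nat.mod_le y q
  have haq : x % q < q := Nat.mod_lt x hq0
  have hbq : y % q < q := Nat.mod_lt y hq0
  have ha0 : x % q % p < p := Nat.mod_lt _ hp0
  have hb0 : y % q % p < p := Nat.mod_lt _ hp0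
  have hda := Nat.div_add_mod (x % q) p
  have hdb := Nat.div_add_mod (y % q) p
  apply mex_eq_of
  · -- the value of the position is not attained by any move
    rintro ⟨z, hz, hfz⟩
    simp only [resMove, Set.mem_union, Set.mem_setOf_eq] at hz
    rcases hz with (⟨s, hs1, hsx, hsq, rfl⟩ | ⟨t, ht1, hty, htq, rfl⟩) |
      ⟨s, t, hs1, hsx, ht1, hty, hst, rfl⟩
    · exact absurd hfz (fval_ne_of_fst hp0 hq0 (mod_sub_ne hs1 (by omega) hsx))
    · exact absurd hfz (fval_ne_of_snd hp0 hq0 (mod_sub_ne ht1 (by omega) hty))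
    · have h1 := congrArg (· % p) hfz
      rw [fval_mod hp0 hpq, fval_mod hp0 hpq] at h1
      have h2 : (x - s) + (y - t) = (x + y) - (s + t) := by omega
      rw [h2] at h1
      exact mod_sub_ne (by omega) (by omega) (by omega) h1
  · -- every smaller value is attained by some move
    intro k hk
    have hkk := Nat.div_add_mod k p
    have hk0 : k % p < p := Nat.mod_lt _ hp0
    have hfv : fval p q (x, y)
        = (x % q + y % q) % p + p * ((x % q / p) ^^^ (y % q / p)) := rfl
    rw [hfv] at hk
    have hL : (x % q + y % q) % p < p := Nat.mod_lt _ hp0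
    have hLab : (x % q + y % q) % p ≤ x % q % p + y % q % p := by
      rw [Nat.add_mod]
      exact Nat.mod_le _ _
    by_cases hk1 : k / p = (x % q / p) ^^^ (y % q / p)
    · -- same nim-value part: shrink the low part
      rw [hk1] at hkk
      have hk0L : k % p < (x % q + y % q) % p := by omega
      obtain ⟨s, t, hs, ht, hstd⟩ :
          ∃ s t, s ≤ x % q % p ∧ t ≤ y % q % p ∧
            s + t = (x % q + y % q) % p - k % p :=
        ⟨min ((x % q + y % q) % p - k % p) (x % q % p),
          (x % q + y % q) % p - k % p -
            min ((x % q + y % q) % p - k % p) (x % q % p),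
          Nat.min_le_right _ _, by omega, by omega⟩
      have ht2 : t ≤ y % q % p := by omega
      have hval : fval p q (x - s, y - t) = k := by
        rw [fval_sub_small hp0 hq0 hs ht2 (by omega)]
        omega
      have hsx : s ≤ x := le_trans hs (le_trans (Nat.mod_le _ _) hax)
      have hty : t ≤ y := le_trans ht2 (le_trans (Nat.mod_le _ _) hby)
      rcases Nat.eq_zero_or_pos s with hs0 | hs0
      · refine ⟨(x - s, y - t), ?_, hval⟩
        simp only [resMove, Set.mem_union, Set.mem_setOf_eq]
        exact Or.inl (Or.inr ⟨t, by omega, hty, by omega, by rw [hs0, Nat.sub_zero]⟩)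
      · rcases Nat.eq_zero_or_pos t with ht0 | ht0
        · refine ⟨(x - s, y - t), ?_, hval⟩
          simp only [resMove, Set.mem_union, Set.mem_setOf_eq]
          exact Or.inl (Or.inl ⟨s, hs0, hsx, by omega, by rw [ht0, Nat.sub_zero]⟩)
        · refine ⟨(x - s, y - t), ?_, hval⟩
          simp only [resMove, Set.mem_union, Set.mem_setOf_eq]
          exact Or.inr ⟨s, t, hs0, hsx, ht0, hty, by omega, rfl⟩
    · -- different nim-value part
      have hk1lt : k / p < (x % q / p) ^^^ (y % q / p) := by
        rcases Nat.lt_or_ge (k / p) ((x % q / p) ^^^ (y % q / p)) with h | h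
        · exact h
        · exfalso
          have h1 : ((x % q / p) ^^^ (y % q / p)) + 1 ≤ k / p := by omega
          have h2 : p * (((x % q / p) ^^^ (y % q / p)) + 1) ≤ p * (k / p) :=
            Nat.mul_le_mul_left _ h1
          rw [Nat.mul_add, Nat.mul_one] at h2
          omega
      rcases Nat.lt_xor_cases hk1lt with hcase | hcase
      · -- move in the first coordinate
        have ha0'lt : (k % p + (p - y % q % p)) % p < p := Nat.mod_lt _ hp0
        have hAa : p * ((k / p) ^^^ (y % q / p)) + (k % p + (p - y % q % p)) % p
            < x % q := by
          have h1 : p * (((k / p) ^^^ (y % q / p)) + 1) ≤ p * (x % q / p) :=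
            Nat.mul_le_mul_left _ (by omega)
          rw [Nat.mul_add, Nat.mul_one] at h1
          omega
        refine ⟨(x - (x % q - (p * ((k / p) ^^^ (y % q / p)) +
            (k % p + (p - y % q % p)) % p)), y), ?_, ?_⟩
        · simp only [resMove, Set.mem_union, Set.mem_setOf_eq]
          exact Or.inl (Or.inl ⟨x % q - _, by omega, by omega, by omega, rfl⟩)
        · rw [fval_hor hq0 hAa]
          have hAp : (p * ((k / p) ^^^ (y % q / p)) +
              (k % p + (p - y % q % p)) % p) / p = (k / p) ^^^ (y % q / p) := by
            rw [Nat.mul_add_div hp0, Nat.div_eq_of_lt ha0'lt, Nat.add_zero]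
          have hAm : (p * ((k / p) ^^^ (y % q / p)) +
              (k % p + (p - y % q % p)) % p) % p = (k % p + (p - y % q % p)) % p := by
            rw [Nat.mul_add_mod]
            exact Nat.mod_eq_of_lt ha0'lt
          have hlow : (p * ((k / p) ^^^ (y % q / p)) +
              (k % p + (p - y % q % p)) % p + y % q) % p = k % p := by
            rw [Nat.add_mod, hAm, Nat.mod_add_mod]
            have h3 : k % p + (p - y % q % p) + y % q % p = k % p + p := by omega
            rw [h3, Nat.add_mod_right]
            exact Nat.mod_eq_of_lt hk0
          rw [hAp, hlow, xor_cancel_right]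
          omega
      · -- move in the second coordinate
        have hb0'lt : (k % p + (p - x % q % p)) % p < p := Nat.mod_lt _ hp0
        have hBb : p * ((k / p) ^^^ (x % q / p)) + (k % p + (p - x % q % p)) % p
            < y % q := by
          have h1 : p * (((k / p) ^^^ (x % q / p)) + 1) ≤ p * (y % q / p) :=
            Nat.mul_le_mul_left _ (by omega)
          rw [Nat.mul_add, Nat.mul_one] at h1
          omega
        refine ⟨(x, y - (y % q - (p * ((k / p) ^^^ (x % q / p)) +
            (k % p + (p - x % q % p)) % p))), ?_, ?_⟩
        · simp only [resMove, Set.mem_union, Set.mem_setOf_eq]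
          exact Or.inl (Or.inr ⟨y % q - _, by omega, by omega, by omega, rfl⟩)
        · rw [fval_ver hq0 hBb]
          have hBp : (p * ((k / p) ^^^ (x % q / p)) +
              (k % p + (p - x % q % p)) % p) / p = (k / p) ^^^ (x % q / p) := by
            rw [Nat.mul_add_div hp0, Nat.div_eq_of_lt hb0'lt, Nat.add_zero]
          have hBm : (p * ((k / p) ^^^ (x % q / p)) +
              (k % p + (p - x % q % p)) % p) % p = (k % p + (p - x % q % p)) % p := by
            rw [Nat.mul_add_mod]
            exact Nat.mod_eq_of_lt hb0'lt
          have hlow : (x % q + (p * ((k / p) ^^^ (x % q / p)) +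
              (k % p + (p - x % q % p)) % p)) % p = k % p := by
            rw [Nat.add_mod, hBm, Nat.add_mod_mod]
            have h3 : x % q % p + (k % p + (p - x % q % p)) = k % p + p := by omega
            rw [h3, Nat.add_mod_right]
            exact Nat.mod_eq_of_lt hk0
          have hhigh : (x % q / p) ^^^ ((k / p) ^^^ (x % q / p)) = k / p := by
            rw [Nat.xor_comm (k / p) (x % q / p), ← Nat.xor_assoc, Nat.xor_self,
              Nat.zero_xor]
          rw [hBp, hlow, hhigh]
          omega

end RyuoAux

theorem stmt_12 (p q : ℕ) (hp : 2 ≤ p) (hq : 2 ≤ q) (hqp : q % p = 0)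
    (G : ℕ × ℕ → ℕ) (hG : ∀ pos : ℕ × ℕ, G pos = mex (G '' resMove p q q pos)) :
    ∀ x y : ℕ, G (x, y) =
      (x % q + y % q) % p + p * ((x % q / p) ^^^ (y % q / p)) := by
  have hpq : p ∣ q := Nat.dvd_of_mod_eq_zero hqp
  suffices H : ∀ n : ℕ, ∀ x y : ℕ, x + y = n → G (x, y) = RyuoAux.fval p q (x, y) by
    intro x y
    exact H (x + y) x y rfl
  intro n
  induction n using Nat.strong_induction_on with
  | _ n ih =>
    intro x y hxy
    rw [hG (x, y)]
    have himg : G '' resMove p q q (x, y) = RyuoAux.fval p q '' resMove p q q (x, y) := by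
      apply Set.image_congr
      intro z hz
      have hlt : z.1 + z.2 < n := hxy ▸ RyuoAux.move_lt hz
      have h := ih (z.1 + z.2) hlt z.1 z.2 rfl
      simpa using h
    rw [himg]
    exact RyuoAux.key hp hq hpq x y
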